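/- arXiv:2106.07298 — 2 statements merged into one kernel-verified Lean document; each statement's English description precedes it below -/
import Mathlib

section
/- There exists a constant C > 0 such that for every irrational x ∈ (0,1), |W(x) - Σ_{j=0}^∞ (-1)^j (log q_{j+1}(x))/q_j(x)| < C whenever both series converge (and each converges iff the other does). -/
open Finset Filter

noncomputable def gaussMap (x : ℝ) : ℝ := Int.fract (1 / x)

/-- `betaP x n` is β_{n-1}(x) = ∏_{i=0}^{n-1} Gⁱ(x), with `betaP x 0 = 1`. -/
noncomputable def betaP (x : ℝ) (n : ℕ) : ℝ := ∏ i ∈ Finset.range n, gaussMap^[i] x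

/-- the (n+1)-st partial quotient a_{n+1} = ⌊1/Gⁿ(x)⌋ of the regular continued fraction. -/
noncomputable def cfDigit (x : ℝ) (n : ℕ) : ℤ := ⌊1 / gaussMap^[n] x⌋

/-- `convAux x n = ((pₙ, qₙ), (pₙ₋₁, qₙ₋₁))`, the convergents of the regular continued
fraction of `x`, with `p₋₁ = 1, q₋₁ = 0, p₀ = 0, q₀ = 1`. -/
noncomputable def convAux (x : ℝ) : ℕ → (ℤ × ℤ) × (ℤ × ℤ)
  | 0 => ((0, 1), (1, 0))
  | n + 1 =>
      ((cfDigit x n * (convAux x n).1.1 + (convAux x n).2.1,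
        cfDigit x n * (convAux x n).1.2 + (convAux x n).2.2),
       (convAux x n).1)

/-- numerator pₙ of the n-th principal convergent of `x`. -/
noncomputable def pConv (x : ℝ) (n : ℕ) : ℤ := (convAux x n).1.1

/-- denominator qₙ of the n-th principal convergent of `x`. -/
noncomputable def qConv (x : ℝ) (n : ℕ) : ℤ := (convAux x n).1.2
set_option maxHeartbeats 1000000
lemma gauss_step {y : ℝ} (h : Irrational y) (h0 : 0 < y) (h1 : y < 1) :
    Irrational (gaussMap y) ∧ 0 < gaussMap y ∧ gaussMap y < 1 := by
  have hinv : Irrational (1 / y) := by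
    simpa [one_div] using h.inv
  have hirr : Irrational (gaussMap y) := by
    have := hinv.sub_intCast ⌊1 / y⌋
    rw [gaussMap, Int.fract]
    exact this
  refine ⟨hirr, ?_, Int.fract_lt_one _⟩
  rw [gaussMap, Int.fract_pos]
  exact fun hc => (hinv.ne_int _) hc

lemma iter_props {x : ℝ} (h : Irrational x) (h0 : 0 < x) (h1 : x < 1) (n : ℕ) :
    Irrational (gaussMap^[n] x) ∧ 0 < gaussMap^[n] x ∧ gaussMap^[n] x < 1 := by
  induction n with
  | zero => exact ⟨h, h0, h1⟩
  | succ n ih =>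
    rw [Function.iterate_succ_apply']
    exact gauss_step ih.1 ih.2.1 ih.2.2

lemma one_div_iter {x : ℝ} (h : Irrational x) (h0 : 0 < x) (h1 : x < 1) (n : ℕ) :
    1 / gaussMap^[n] x = (cfDigit x n : ℝ) + gaussMap^[n+1] x := by
  rw [Function.iterate_succ_apply', gaussMap, Int.fract, cfDigit]
  ring

lemma one_le_cfDigit {x : ℝ} (h : Irrational x) (h0 : 0 < x) (h1 : x < 1) (n : ℕ) :
    1 ≤ cfDigit x n := by
  obtain ⟨hirr, hp, hl⟩ := iter_props h h0 h1 n
  have : (1:ℝ) ≤ 1 / gaussMap^[n] x := by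
    rw [le_div_iff₀ hp]
    linarith
  exact_mod_cast Int.le_floor.2 (by exact_mod_cast this)

lemma qConv_succ (x : ℝ) (n : ℕ) :
    qConv x (n+1) = cfDigit x n * qConv x n + (convAux x n).2.2 := rfl

lemma q'_succ (x : ℝ) (n : ℕ) : (convAux x (n+1)).2.2 = qConv x n := rfl

lemma q_bounds {x : ℝ} (h : Irrational x) (h0 : 0 < x) (h1 : x < 1) (n : ℕ) :
    0 ≤ (convAux x n).2.2 ∧ 1 ≤ qConv x n ∧ (convAux x n).2.2 ≤ qConv x n := by
  induction n with
  | zero => simp [convAux, qConv]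
  | succ n ih =>
    obtain ⟨h1', h2', h3'⟩ := ih
    have ha := one_le_cfDigit h h0 h1 n
    have hq : qConv x (n+1) = cfDigit x n * qConv x n + (convAux x n).2.2 := rfl
    constructor
    · rw [q'_succ]; omega
    constructor
    · rw [hq]; nlinarith
    · rw [q'_succ, hq]; nlinarith

lemma beta_id {x : ℝ} (h : Irrational x) (h0 : 0 < x) (h1 : x < 1) (n : ℕ) :
    betaP x n * ((qConv x n : ℝ) + ((convAux x n).2.2 : ℝ) * gaussMap^[n] x) = 1 := by
  induction n with
  | zero => simp [betaP, convAux, qConv]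
  | succ n ih =>
    have hstep := one_div_iter h h0 h1 n
    have hp := (iter_props h h0 h1 n).2.1
    have hbs : betaP x (n+1) = betaP x n * gaussMap^[n] x := by
      rw [betaP, betaP, Finset.prod_range_succ]
    have hrec : ((qConv x (n+1) : ℝ)) = (cfDigit x n : ℝ) * (qConv x n : ℝ) + ((convAux x n).2.2 : ℝ) := by
      rw [qConv_succ]; push_cast; ring
    have hQ' : ((convAux x (n+1)).2.2 : ℝ) = (qConv x n : ℝ) := by rw [q'_succ]
    rw [hbs, hrec, hQ']
    have key : gaussMap^[n] x * ((cfDigit x n : ℝ) + gaussMap^[n+1] x) = 1 := by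
      rw [← hstep]; field_simp
    linear_combination ih + betaP x n * (qConv x n : ℝ) * key

lemma q_growth {x : ℝ} (h : Irrational x) (h0 : 0 < x) (h1 : x < 1) (k : ℕ) :
    (2:ℤ)^k ≤ qConv x (2*k) ∧ (2:ℤ)^k ≤ qConv x (2*k+1) := by
  induction k with
  | zero =>
    constructor
    · simp [qConv, convAux]
    · have := (q_bounds h h0 h1 1).2.1; simpa using this
  | succ k ih =>
    have e1 : 2*(k+1) = (2*k+1)+1 := by ring
    have e2 : 2*(k+1)+1 = ((2*k+1)+1)+1 := by ring
    have ha1 := one_le_cfDigit h h0 h1 (2*k+1)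
    have ha2 := one_le_cfDigit h h0 h1 (2*k+2)
    have hb1 := q_bounds h h0 h1 (2*k+1)
    have hb2 := q_bounds h h0 h1 (2*k+2)
    have hq1 : qConv x ((2*k+1)+1) = cfDigit x (2*k+1) * qConv x (2*k+1) + (convAux x (2*k+1)).2.2 := rfl
    have hq2 : qConv x ((2*k+2)+1) = cfDigit x (2*k+2) * qConv x (2*k+2) + (convAux x (2*k+2)).2.2 := rfl
    have hqq : (convAux x (2*k+1)).2.2 = qConv x (2*k) := q'_succ x (2*k)
    have hqq2 : (convAux x (2*k+2)).2.2 = qConv x (2*k+1) := q'_succ x (2*k+1)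
    constructor
    · rw [e1, hq1, hqq]
      have hm : 1 * qConv x (2*k+1) ≤ cfDigit x (2*k+1) * qConv x (2*k+1) :=
        mul_le_mul_of_nonneg_right ha1 (by linarith [hb1.2.1])
      have h2 : (2:ℤ)^(k+1) = 2^k + 2^k := by ring
      rw [h2]; linarith [ih.1, ih.2]
    · rw [e2, hq2, hqq2]
      have h1' : qConv x (2*k+2) = qConv x ((2*k+1)+1) := by norm_num
      rw [h1', hq1, hqq]
      have hQ1 : (1:ℤ) ≤ qConv x (2*k+1) := hb1.2.1
      have hQ0 : (0:ℤ) ≤ qConv x (2*k) := by linarith [(q_bounds h h0 h1 (2*k)).2.1]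
      have hinner : (0:ℤ) ≤ cfDigit x (2*k+1) * qConv x (2*k+1) + qConv x (2*k) := by positivity
      have hm : 1 * (cfDigit x (2*k+1) * qConv x (2*k+1) + qConv x (2*k)) ≤
          cfDigit x (2*k+2) * (cfDigit x (2*k+1) * qConv x (2*k+1) + qConv x (2*k)) :=
        mul_le_mul_of_nonneg_right ha2 hinner
      have hm2 : 1 * qConv x (2*k+1) ≤ cfDigit x (2*k+1) * qConv x (2*k+1) :=
        mul_le_mul_of_nonneg_right ha1 (by linarith)
      have h2 : (2:ℤ)^(k+1) = 2^k + 2^k := by ring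
      rw [h2]; linarith [ih.1, ih.2]

lemma log_aux {m : ℝ} (hm : 1 ≤ m) : (Real.log 2 + Real.log m) / m ≤ 3 / Real.sqrt m := by
  have hm0 : 0 < m := by linarith
  have hs1 : 1 ≤ Real.sqrt m := by
    rw [show (1:ℝ) = Real.sqrt 1 by simp]
    exact Real.sqrt_le_sqrt hm
  have hs0 : 0 < Real.sqrt m := by linarith
  have hms : Real.sqrt m * Real.sqrt m = m := Real.mul_self_sqrt hm0.le
  have h2 : Real.log 2 ≤ 1 := by
    have := Real.log_le_sub_one_of_pos (by norm_num : (0:ℝ) < 2)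
    linarith
  have hlm : Real.log m ≤ 2 * Real.sqrt m := by
    have : Real.log (Real.sqrt m) = Real.log m / 2 := Real.log_sqrt hm0.le
    have hls : Real.log (Real.sqrt m) ≤ Real.sqrt m - 1 := Real.log_le_sub_one_of_pos hs0
    linarith
  have hnum : Real.log 2 + Real.log m ≤ 3 * Real.sqrt m := by nlinarith
  calc (Real.log 2 + Real.log m) / m ≤ 3 * Real.sqrt m / m := by gcongr
    _ = 3 / Real.sqrt m := by
        rw [div_eq_div_iff hm0.ne' hs0.ne']
        nlinarith

lemma abstract_bound {t β Qr Q2 K ar : ℝ} (ht0 : 0 < t)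
    (haA : ar ≤ 1 / t) (hAa : 1 / t < ar + 1) (har : 1 ≤ ar)
    (hQ1 : 1 ≤ Qr) (hK0 : 0 ≤ K) (hKQ : K ≤ Qr)
    (hQ2eq : Q2 = ar * Qr + K) (hβid : β * (Qr + K * t) = 1) :
    |β * Real.log (1 / t) - Real.log Q2 / Qr| ≤ 9 / Real.sqrt Qr := by
  have hA1 : 1 ≤ 1 / t := by nlinarith
  have ha0 : (0:ℝ) < ar := by linarith
  have hQr0 : (0:ℝ) < Qr := by linarith
  set S := Qr + K * t with hSdef
  have hKt : 0 ≤ K * t := mul_nonneg hK0 ht0.le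
  have hS0 : 0 < S := by rw [hSdef]; linarith
  have hβeq : β = 1 / S := by
    field_simp
    linarith [hβid]
  have hSQ : Qr ≤ S := by rw [hSdef]; linarith
  have hat : ar * t ≤ 1 := by
    rw [le_div_iff₀ ht0] at haA; linarith
  have hta : t ≤ 1 / ar := by
    rw [le_div_iff₀ ha0]; linarith [mul_comm ar t]
  have hA_lt : 1 / t < 2 * ar := by linarith
  have hQ2ge : Qr ≤ Q2 := by rw [hQ2eq]; nlinarith
  have hQ2ge_a : ar ≤ Q2 := by rw [hQ2eq]; nlinarith
  have hQ2pos : (0:ℝ) < Q2 := by linarith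
  have hQ2le : Q2 ≤ 2 * ar * Qr := by rw [hQ2eq]; nlinarith
  have hb_le : β ≤ 1 / Qr := by
    rw [hβeq]
    exact one_div_le_one_div_of_le hQr0 hSQ
  have hb_ge : 1 / Qr - β ≤ 2 / Q2 := by
    have e1 : 1 / Qr - β = K * t / (Qr * S) := by
      rw [hβeq]; field_simp; ring
    have e2 : K * t / (Qr * S) ≤ K * t / (Qr * Qr) := by
      apply div_le_div_of_nonneg_left hKt (by positivity)
      nlinarith
    have e3 : K * t / (Qr * Qr) ≤ 2 / Q2 := by
      rw [div_le_div_iff₀ (by positivity) hQ2pos]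
      have h5 : K * t ≤ Qr * (1 / ar) := by
        apply mul_le_mul hKQ hta ht0.le hQr0.le
      have h6 : K * t * ar ≤ Qr := by nlinarith
      nlinarith
    linarith
  have habs1 : |β - 1 / Qr| ≤ 2 / Q2 := by
    rw [abs_le]
    refine ⟨by linarith, ?_⟩
    have : 0 < 2 / Q2 := by positivity
    linarith
  have hlogA0 : 0 ≤ Real.log (1 / t) := Real.log_nonneg hA1
  have hlogQr0 : 0 ≤ Real.log Qr := Real.log_nonneg hQ1
  have hlogA_le : Real.log (1 / t) ≤ Real.log 2 + Real.log Q2 := by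
    have h2q : 1 / t ≤ 2 * Q2 := by linarith
    calc Real.log (1 / t) ≤ Real.log (2 * Q2) := Real.log_le_log (by linarith) h2q
      _ = Real.log 2 + Real.log Q2 := Real.log_mul (by norm_num) (by linarith)
  have hlog_diff : |Real.log (1 / t) - Real.log Q2| ≤ Real.log 2 + Real.log Qr := by
    rw [abs_le]
    constructor
    · have h7 : Real.log Q2 ≤ Real.log 2 + Real.log ar + Real.log Qr := by
        calc Real.log Q2 ≤ Real.log (2 * ar * Qr) := Real.log_le_log hQ2pos hQ2le
          _ = Real.log 2 + Real.log ar + Real.log Qr := by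
              rw [Real.log_mul (by positivity) (by positivity),
                Real.log_mul (by norm_num) (by positivity)]
      have h8 : Real.log ar ≤ Real.log (1 / t) := Real.log_le_log ha0 haA
      linarith
    · have h9 : Real.log (1 / t) ≤ Real.log 2 + Real.log ar := by
        calc Real.log (1 / t) ≤ Real.log (2 * ar) := Real.log_le_log (by positivity) hA_lt.le
          _ = Real.log 2 + Real.log ar := Real.log_mul (by norm_num) (by positivity)
      have h10 : Real.log ar + Real.log Qr ≤ Real.log Q2 := by
        have harq : ar * Qr ≤ Q2 := by rw [hQ2eq]; nlinarith
        calc Real.log ar + Real.log Qr = Real.log (ar * Qr) :=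
              (Real.log_mul (by positivity) (by positivity)).symm
          _ ≤ Real.log Q2 := Real.log_le_log (by positivity) harq
      linarith
  have hdecomp : β * Real.log (1 / t) - Real.log Q2 / Qr =
      (β - 1 / Qr) * Real.log (1 / t) + (Real.log (1 / t) - Real.log Q2) / Qr := by
    field_simp; ring
  rw [hdecomp]
  have hsqQr : 0 < Real.sqrt Qr := Real.sqrt_pos.2 hQr0
  have hsqQ2 : 0 < Real.sqrt Q2 := Real.sqrt_pos.2 hQ2pos
  have hsqle : Real.sqrt Qr ≤ Real.sqrt Q2 := Real.sqrt_le_sqrt hQ2ge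
  have haux2 : (Real.log 2 + Real.log Q2) / Q2 ≤ 3 / Real.sqrt Q2 := log_aux (by linarith)
  have haux1 : (Real.log 2 + Real.log Qr) / Qr ≤ 3 / Real.sqrt Qr := log_aux hQ1
  calc |(β - 1 / Qr) * Real.log (1 / t) + (Real.log (1 / t) - Real.log Q2) / Qr|
      ≤ |(β - 1 / Qr) * Real.log (1 / t)| + |(Real.log (1 / t) - Real.log Q2) / Qr| :=
        abs_add_le _ _
    _ ≤ (2 / Q2) * (Real.log 2 + Real.log Q2) + (Real.log 2 + Real.log Qr) / Qr := by
        gcongr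
        · rw [abs_mul, abs_of_nonneg hlogA0]
          exact mul_le_mul habs1 hlogA_le hlogA0 (by positivity)
        · rw [abs_div, abs_of_pos hQr0]
          gcongr
    _ ≤ 2 * (3 / Real.sqrt Q2) + 3 / Real.sqrt Qr := by
        have he : (2 / Q2) * (Real.log 2 + Real.log Q2) = 2 * ((Real.log 2 + Real.log Q2) / Q2) := by
          ring
        rw [he]
        gcongr
    _ ≤ 2 * (3 / Real.sqrt Qr) + 3 / Real.sqrt Qr := by gcongr
    _ = 9 / Real.sqrt Qr := by ring

lemma term_bound {x : ℝ} (h : Irrational x) (h0 : 0 < x) (h1 : x < 1) (n : ℕ) :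
    |betaP x n * Real.log (1 / gaussMap^[n] x) -
      Real.log ((qConv x (n+1) : ℤ) : ℝ) / ((qConv x n : ℤ) : ℝ)| ≤
      9 / Real.sqrt ((qConv x n : ℤ) : ℝ) := by
  obtain ⟨hirr, ht0, ht1⟩ := iter_props h h0 h1 n
  refine abstract_bound (K := (((convAux x n).2.2 : ℤ) : ℝ))
    (ar := ((cfDigit x n : ℤ) : ℝ)) ht0 ?_ ?_ ?_ ?_ ?_ ?_ ?_ ?_
  · exact Int.floor_le _
  · exact Int.lt_floor_add_one _
  · exact_mod_cast one_le_cfDigit h h0 h1 n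
  · exact_mod_cast (q_bounds h h0 h1 n).2.1
  · exact_mod_cast (q_bounds h h0 h1 n).1
  · exact_mod_cast (q_bounds h h0 h1 n).2.2
  · rw [qConv_succ]; push_cast; ring
  · exact beta_id h h0 h1 n

lemma sqrt_q_ge {x : ℝ} (h : Irrational x) (h0 : 0 < x) (h1 : x < 1) (n : ℕ) :
    9 / Real.sqrt ((qConv x n : ℤ) : ℝ) ≤
      18 * ((Real.sqrt (Real.sqrt 2))⁻¹) ^ n := by
  set c := Real.sqrt (Real.sqrt 2) with hcdef
  have hs2 : (1:ℝ) < Real.sqrt 2 := by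
    rw [show (1:ℝ) = Real.sqrt 1 by simp]
    exact Real.sqrt_lt_sqrt (by norm_num) (by norm_num)
  have hc1 : (1:ℝ) < c := by
    rw [hcdef, show (1:ℝ) = Real.sqrt 1 by simp]
    exact Real.sqrt_lt_sqrt (by norm_num) hs2
  have hc0 : (0:ℝ) < c := by linarith
  have hc2 : c ^ 2 = Real.sqrt 2 := Real.sq_sqrt (Real.sqrt_nonneg 2)
  have hc4 : c ^ 4 = 2 := by
    have h44 : c ^ 4 = (c ^ 2) ^ 2 := by ring
    rw [h44, hc2]
    exact Real.sq_sqrt (by norm_num)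
  have hQ1 : (1:ℝ) ≤ ((qConv x n : ℤ) : ℝ) := by
    exact_mod_cast (q_bounds h h0 h1 n).2.1
  have hQ0 : (0:ℝ) < ((qConv x n : ℤ) : ℝ) := by linarith
  have key : c ^ (2 * n) ≤ 2 * ((qConv x n : ℤ) : ℝ) := by
    rcases Nat.even_or_odd n with ⟨k, hk⟩ | ⟨k, hk⟩
    · subst hk
      have h2k : k + k = 2 * k := (two_mul k).symm
      rw [h2k]
      have hgr : ((2:ℝ)^k) ≤ ((qConv x (2*k) : ℤ) : ℝ) := by
        exact_mod_cast (q_growth h h0 h1 k).1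
      have he : c ^ (2 * (2 * k)) = 2 ^ k := by
        rw [show 2 * (2 * k) = 4 * k by ring, pow_mul, hc4]
      rw [he]
      have := pow_pos (show (0:ℝ) < 2 by norm_num) k
      linarith
    · subst hk
      have hgr : ((2:ℝ)^k) ≤ ((qConv x (2*k+1) : ℤ) : ℝ) := by
        exact_mod_cast (q_growth h h0 h1 k).2
      have he : c ^ (2 * (2 * k + 1)) = 2 ^ k * c ^ 2 := by
        rw [show 2 * (2 * k + 1) = 4 * k + 2 by ring, pow_add, pow_mul, hc4]
      rw [he]
      have hcs : c ^ 2 ≤ 2 := by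
        rw [hc2]
        have := (Real.sqrt_le_left (show (0:ℝ) ≤ 2 by norm_num)).2 (by norm_num : (2:ℝ) ≤ 2 ^ 2)
        linarith
      have := pow_pos (show (0:ℝ) < 2 by norm_num) k
      nlinarith
  have hcn : (0:ℝ) < c ^ n := pow_pos hc0 n
  have hsqrt0 : 0 < Real.sqrt ((qConv x n : ℤ) : ℝ) := Real.sqrt_pos.2 hQ0
  have hsq : c ^ n / 2 ≤ Real.sqrt ((qConv x n : ℤ) : ℝ) := by
    apply Real.le_sqrt_of_sq_le
    have e : (c ^ n) ^ 2 = c ^ (2 * n) := by rw [← pow_mul, Nat.mul_comm]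
    nlinarith
  have main : 9 / Real.sqrt ((qConv x n : ℤ) : ℝ) ≤ 18 / c ^ n := by
    rw [div_le_div_iff₀ hsqrt0 hcn]
    nlinarith
  calc 9 / Real.sqrt ((qConv x n : ℤ) : ℝ) ≤ 18 / c ^ n := main
    _ = 18 * (c⁻¹) ^ n := by rw [inv_pow, div_eq_mul_inv]

theorem wilton_comparison :
    ∃ C : ℝ, 0 < C ∧ ∀ x : ℝ, Irrational x → 0 < x → x < 1 →
      ((∃ L : ℝ, Tendsto (fun N => ∑ n ∈ Finset.range N,
            (-1 : ℝ) ^ n * betaP x n * Real.log (1 / gaussMap^[n] x)) atTop (nhds L)) ↔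
        (∃ L' : ℝ, Tendsto (fun N => ∑ n ∈ Finset.range N,
            (-1 : ℝ) ^ n * (Real.log (qConv x (n + 1) : ℝ) / (qConv x n : ℝ)))
            atTop (nhds L'))) ∧
      (∀ L L' : ℝ,
        Tendsto (fun N => ∑ n ∈ Finset.range N,
            (-1 : ℝ) ^ n * betaP x n * Real.log (1 / gaussMap^[n] x)) atTop (nhds L) →
        Tendsto (fun N => ∑ n ∈ Finset.range N,
            (-1 : ℝ) ^ n * (Real.log (qConv x (n + 1) : ℝ) / (qConv x n : ℝ)))
            atTop (nhds L') →
        |L - L'| < C) := by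
  set c := Real.sqrt (Real.sqrt 2) with hcdef
  have hs2 : (1:ℝ) < Real.sqrt 2 := by
    rw [show (1:ℝ) = Real.sqrt 1 by simp]
    exact Real.sqrt_lt_sqrt (by norm_num) (by norm_num)
  have hc1 : (1:ℝ) < c := by
    rw [hcdef, show (1:ℝ) = Real.sqrt 1 by simp]
    exact Real.sqrt_lt_sqrt (by norm_num) hs2
  set r := c⁻¹ with hrdef
  have hr0 : (0:ℝ) ≤ r := by positivity
  have hr1 : r < 1 := inv_lt_one_of_one_lt₀ hc1
  have hr1' : 0 < 1 - r := by linarith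
  refine ⟨18 * (1 - r)⁻¹ + 1, by positivity, ?_⟩
  intro x hirr hx0 hx1
  set f : ℕ → ℝ := fun n =>
    (-1 : ℝ) ^ n * betaP x n * Real.log (1 / gaussMap^[n] x) with hfdef
  set g : ℕ → ℝ := fun n =>
    (-1 : ℝ) ^ n * (Real.log (qConv x (n + 1) : ℝ) / (qConv x n : ℝ)) with hgdef
  set D : ℕ → ℝ := fun n => f n - g n with hDdef
  have hDb : ∀ n, |D n| ≤ 18 * r ^ n := by
    intro n
    have h1 : D n = (-1 : ℝ) ^ n * (betaP x n * Real.log (1 / gaussMap^[n] x) -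
        Real.log (qConv x (n + 1) : ℝ) / (qConv x n : ℝ)) := by
      rw [hDdef, hfdef, hgdef]; ring
    rw [h1, abs_mul, abs_pow, abs_neg, abs_one, one_pow, one_mul]
    calc |betaP x n * Real.log (1 / gaussMap^[n] x) -
        Real.log (qConv x (n + 1) : ℝ) / (qConv x n : ℝ)|
        ≤ 9 / Real.sqrt ((qConv x n : ℤ) : ℝ) := term_bound hirr hx0 hx1 n
      _ ≤ 18 * r ^ n := sqrt_q_ge hirr hx0 hx1 n
  have hgeom : Summable (fun n : ℕ => 18 * r ^ n) :=
    (summable_geometric_of_lt_one hr0 hr1).mul_left 18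
  have habs : Summable (fun n => |D n|) :=
    Summable.of_nonneg_of_le (fun n => abs_nonneg _) hDb hgeom
  have hD : Summable D := Summable.of_abs habs
  have hptend : Tendsto (fun N => ∑ n ∈ Finset.range N, D n) atTop (nhds (∑' n, D n)) :=
    hD.hasSum.tendsto_sum_nat
  have hsum_g : ∀ N, ∑ n ∈ Finset.range N, g n =
      (∑ n ∈ Finset.range N, f n) - ∑ n ∈ Finset.range N, D n := by
    intro N
    rw [← Finset.sum_sub_distrib]
    exact Finset.sum_congr rfl fun n _ => by rw [hDdef]; ring
  have hsum_f : ∀ N, ∑ n ∈ Finset.range N, f n =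
      (∑ n ∈ Finset.range N, g n) + ∑ n ∈ Finset.range N, D n := by
    intro N
    rw [← Finset.sum_add_distrib]
    exact Finset.sum_congr rfl fun n _ => by rw [hDdef]; ring
  have htsum_bound : |∑' n, D n| ≤ 18 * (1 - r)⁻¹ := by
    have h1 : |∑' n, D n| ≤ ∑' n, |D n| := by
      simpa [Real.norm_eq_abs] using
        norm_tsum_le_tsum_norm (f := D) (by simpa [Real.norm_eq_abs] using habs)
    have h2 : ∑' n, |D n| ≤ ∑' n : ℕ, 18 * r ^ n := habs.tsum_le_tsum hDb hgeom
    have h3 : ∑' n : ℕ, 18 * r ^ n = 18 * (1 - r)⁻¹ := by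
      rw [tsum_mul_left, tsum_geometric_of_lt_one hr0 hr1]
    linarith
  constructor
  · constructor
    · rintro ⟨L, hL⟩
      refine ⟨L - ∑' n, D n, ?_⟩
      have he : (fun N => ∑ n ∈ Finset.range N, g n) =
          fun N => (∑ n ∈ Finset.range N, f n) - ∑ n ∈ Finset.range N, D n :=
        funext hsum_g
      rw [he]
      exact hL.sub hptend
    · rintro ⟨L', hL'⟩
      refine ⟨L' + ∑' n, D n, ?_⟩
      have he : (fun N => ∑ n ∈ Finset.range N, f n) =
          fun N => (∑ n ∈ Finset.range N, g n) + ∑ n ∈ Finset.range N, D n :=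
        funext hsum_f
      rw [he]
      exact hL'.add hptend
  · intro L L' hL hL'
    have hdiff : Tendsto (fun N => (∑ n ∈ Finset.range N, f n) -
        ∑ n ∈ Finset.range N, g n) atTop (nhds (L - L')) := hL.sub hL'
    have heq : (fun N => (∑ n ∈ Finset.range N, f n) - ∑ n ∈ Finset.range N, g n) =
        fun N => ∑ n ∈ Finset.range N, D n := by
      funext N
      rw [← Finset.sum_sub_distrib]
    rw [heq] at hdiff
    have hLL : L - L' = ∑' n, D n := tendsto_nhds_unique hdiff hptend
    rw [hLL]
    linarith [htsum_bound, abs_nonneg (∑' n, D n)]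
end

section
/- There exists an irrational number x ∈ (0,1) that is a Wilton number but not a Brjuno number, i.e. the alternating series Σ_{n≥0}(-1)ⁿ(log q_{n+1}(x))/q_n(x) converges while Σ_{n≥0}(log q_{n+1}(x))/q_n(x) diverges. -/
open Finset Filter

/-- denominators of convergents for digit sequence `a` -/
def qq (a : ℕ → ℕ) : ℕ → ℕ
  | 0 => 1
  | 1 => a 0
  | n+2 => a (n+1) * qq a (n+1) + qq a n

def pp (a : ℕ → ℕ) : ℕ → ℕ
  | 0 => 0
  | 1 => 1
  | n+2 => a (n+1) * pp a (n+1) + pp a n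

section CF
variable {a : ℕ → ℕ} (ha : ∀ n, 2 ≤ a n)

include ha in
lemma qq_ge_pow : ∀ n, 2 ^ n ≤ qq a n := by
  intro n
  induction n using Nat.strong_induction_on with
  | _ n ih =>
    match n with
    | 0 => simp [qq]
    | 1 => simpa [qq] using ha 0
    | n+2 =>
      have h1 := ih (n+1) (by omega)
      calc 2 ^ (n+2) = 2 * 2 ^ (n+1) := by ring
        _ ≤ a (n+1) * qq a (n+1) := Nat.mul_le_mul (ha (n+1)) h1
        _ ≤ _ := Nat.le_add_right _ _

include ha in
lemma qq_pos (n : ℕ) : 0 < qq a n := lt_of_lt_of_le (Nat.pow_pos (by norm_num)) (qq_ge_pow ha n)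

include ha in
lemma qq_mono (n : ℕ) : qq a n ≤ qq a (n+1) := by
  match n with
  | 0 => simpa [qq] using (ha 0).trans' (by norm_num)
  | n+1 =>
    show qq a (n+1) ≤ a (n+1) * qq a (n+1) + qq a n
    calc qq a (n+1) ≤ a (n+1) * qq a (n+1) := Nat.le_mul_of_pos_left _ (by have := ha (n+1); omega)
      _ ≤ _ := Nat.le_add_right _ _

include ha in
lemma pp_le_qq : ∀ n, pp a n ≤ qq a n := by
  intro n
  induction n using Nat.strong_induction_on with
  | _ n ih =>
    match n with
    | 0 => simp [pp, qq]
    | 1 => simpa [pp, qq] using (ha 0).trans' (by norm_num)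
    | n+2 =>
      have h1 := ih (n+1) (by omega)
      have h2 := ih n (by omega)
      show a (n+1) * pp a (n+1) + pp a n ≤ a (n+1) * qq a (n+1) + qq a n
      exact Nat.add_le_add (Nat.mul_le_mul_left _ h1) h2

lemma cf_det : ∀ n : ℕ, (pp a (n+1) : ℤ) * qq a n - pp a n * qq a (n+1) = (-1) ^ n := by
  intro n
  induction n with
  | zero => simp [pp, qq]
  | succ n ih =>
    have e1 : pp a (n+2) = a (n+1) * pp a (n+1) + pp a n := rfl
    have e2 : qq a (n+2) = a (n+1) * qq a (n+1) + qq a n := rfl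
    rw [e1, e2]
    push_cast
    push_cast at ih
    ring_nf
    ring_nf at ih
    linarith [ih]

noncomputable def cfval (a : ℕ → ℕ) : ℝ := ∑' n, (-1) ^ n / ((qq a n : ℝ) * qq a (n+1))


include ha in
lemma cf_summable : Summable (fun n => (-1 : ℝ) ^ n / ((qq a n : ℝ) * qq a (n+1))) := by
  apply Summable.of_abs
  apply Summable.of_nonneg_of_le (fun n => abs_nonneg _) (fun n => ?_)
    (summable_geometric_of_lt_one (by norm_num : (0:ℝ) ≤ 1/2) (by norm_num))
  have h0 : (0:ℝ) < qq a n := by exact_mod_cast qq_pos ha n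
  have h1 : (0:ℝ) < qq a (n+1) := by exact_mod_cast qq_pos ha (n+1)
  rw [abs_div, abs_pow, abs_neg, abs_one, one_pow, abs_of_pos (by positivity)]
  rw [div_le_iff₀ (by positivity)]
  have h2 : (2:ℝ) ^ n ≤ qq a n := by exact_mod_cast qq_ge_pow ha n
  have h3 : (1:ℝ) ≤ qq a (n+1) := by exact_mod_cast qq_pos ha (n+1)
  calc (1:ℝ) = (1/2)^n * 2^n * 1 := by rw [div_pow, one_pow]; field_simp
    _ ≤ (1/2)^n * (qq a n * qq a (n+1)) := by
        rw [mul_assoc]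
        exact mul_le_mul_of_nonneg_left (mul_le_mul h2 h3 one_pos.le h0.le) (by positivity)

include ha in
lemma cf_partial (n : ℕ) :
    ∑ k ∈ range n, (-1 : ℝ) ^ k / ((qq a k : ℝ) * qq a (k+1)) = pp a n / qq a n := by
  induction n with
  | zero => simp [pp, qq]
  | succ n ih =>
    rw [Finset.sum_range_succ, ih]
    have h0 : (0:ℝ) < qq a n := by exact_mod_cast qq_pos ha n
    have h1 : (0:ℝ) < qq a (n+1) := by exact_mod_cast qq_pos ha (n+1)
    have det : (pp a (n+1) : ℝ) * qq a n - pp a n * qq a (n+1) = (-1) ^ n := by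
      exact_mod_cast congrArg (Int.cast : ℤ → ℝ) (cf_det n)
    have key : (pp a (n+1):ℝ)/qq a (n+1) - pp a n/qq a n = (-1)^n/((qq a n) * qq a (n+1)) := by
      rw [div_sub_div _ _ h1.ne' h0.ne', mul_comm ((qq a (n+1)):ℝ) ((pp a n):ℝ), det,
        mul_comm ((qq a (n+1)):ℝ)]
    linarith [key]

include ha in
lemma cf_tendsto : Tendsto (fun n => (pp a n : ℝ) / qq a n) atTop (nhds (cfval a)) := by
  have h := ((cf_summable ha).hasSum).tendsto_sum_nat
  convert h using 2 with n
  exact (cf_partial ha n).symm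
  rfl

include ha in
lemma cfval_nonneg : 0 ≤ cfval a :=
  ge_of_tendsto (cf_tendsto ha) (Eventually.of_forall fun n => by positivity)

include ha in
lemma cfval_le_one : cfval a ≤ 1 := by
  refine le_of_tendsto (cf_tendsto ha) (Eventually.of_forall fun n => ?_)
  have h0 : (0:ℝ) < qq a n := by exact_mod_cast qq_pos ha n
  rw [div_le_one h0]
  exact_mod_cast pp_le_qq ha n

lemma pp_shift : ∀ n, pp a (n+1) = qq (fun i => a (i+1)) n := by
  intro n
  induction n using Nat.strong_induction_on with
  | _ n ih =>
    match n with
    | 0 => simp [pp, qq]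
    | 1 => simp [pp, qq]
    | n+2 =>
      show a (n+2) * pp a (n+2) + pp a (n+1) = _
      rw [ih (n+1) (by omega), ih n (by omega)]; rfl

lemma qq_shift : ∀ n, qq a (n+1) = a 0 * qq (fun i => a (i+1)) n + pp (fun i => a (i+1)) n := by
  intro n
  induction n using Nat.strong_induction_on with
  | _ n ih =>
    match n with
    | 0 => simp [pp, qq]
    | 1 => show a 1 * qq a 1 + qq a 0 = _; simp [pp, qq]; ring
    | n+2 =>
      show a (n+2) * qq a (n+2) + qq a (n+1) = _
      rw [ih (n+1) (by omega), ih n (by omega)]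
      show _ = a 0 * (a (n+2) * qq _ (n+1) + qq _ n) + (a (n+2) * pp _ (n+1) + pp _ n)
      ring


include ha in
lemma cfval_eq : cfval a = 1 / (a 0 + cfval (fun i => a (i+1))) := by
  set σ := fun i => a (i+1) with hσ
  have hσa : ∀ n, 2 ≤ σ n := fun n => ha (n+1)
  have hden : (0:ℝ) < a 0 + cfval σ := by
    have := cfval_nonneg hσa
    have h2 : (2:ℝ) ≤ a 0 := by exact_mod_cast ha 0
    linarith
  have h1 : Tendsto (fun n => (pp a (n+1) : ℝ) / qq a (n+1)) atTop (nhds (cfval a)) :=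
    (cf_tendsto ha).comp (tendsto_add_atTop_nat 1)
  have h2 : ∀ n : ℕ, (pp a (n+1) : ℝ) / qq a (n+1)
      = 1 / ((a 0 : ℝ) + (pp σ n : ℝ) / qq σ n) := by
    intro n
    have hq : (0:ℝ) < qq σ n := by exact_mod_cast qq_pos hσa n
    have hp : (0:ℝ) ≤ pp σ n := by positivity
    have ha0 : (0:ℝ) < a 0 := by
      have h20 : (2:ℝ) ≤ a 0 := by exact_mod_cast ha 0
      linarith
    rw [pp_shift, qq_shift]
    push_cast
    rw [eq_div_iff (by positivity)]
    field_simp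
    rw [← hσ, mul_comm (qq σ n : ℝ) (a 0 : ℝ), mul_div_assoc,
      div_self (add_pos_of_pos_of_nonneg (mul_pos ha0 hq) hp).ne', mul_one]
  have h3 : Tendsto (fun n => 1 / ((a 0 : ℝ) + (pp σ n : ℝ) / qq σ n)) atTop
      (nhds (1 / ((a 0 : ℝ) + cfval σ))) := by
    apply Tendsto.div tendsto_const_nhds (Tendsto.const_add _ (cf_tendsto hσa)) hden.ne'
  rw [funext h2] at h1
  exact tendsto_nhds_unique h1 h3

include ha in
lemma cfval_pos : 0 < cfval a := by
  rw [cfval_eq ha]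
  have h0 := cfval_nonneg (fun n => ha (n+1) : ∀ n, 2 ≤ (fun i => a (i+1)) n)
  have h2 : (2:ℝ) ≤ a 0 := by exact_mod_cast ha 0
  positivity

include ha in
lemma cfval_lt_one : cfval a < 1 := by
  rw [cfval_eq ha]
  have h0 := cfval_nonneg (fun n => ha (n+1) : ∀ n, 2 ≤ (fun i => a (i+1)) n)
  have h2 : (2:ℝ) ≤ a 0 := by exact_mod_cast ha 0
  rw [div_lt_one (by linarith)]
  linarith

include ha in
lemma cf_inv : 1 / cfval a = (a 0 : ℝ) + cfval (fun i => a (i+1)) := by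
  have h0 := cfval_nonneg (fun n => ha (n+1) : ∀ n, 2 ≤ (fun i => a (i+1)) n)
  have h2 : (2:ℝ) ≤ a 0 := by exact_mod_cast ha 0
  rw [cfval_eq ha, one_div_one_div]

include ha in
lemma cf_gauss : gaussMap (cfval a) = cfval (fun i => a (i+1)) := by
  have hs : ∀ n, 2 ≤ (fun i => a (i+1)) n := fun n => ha (n+1)
  rw [gaussMap, cf_inv ha]
  rw [Int.fract]
  have : ⌊(a 0 : ℝ) + cfval (fun i => a (i+1))⌋ = (a 0 : ℤ) := by
    rw [Int.floor_eq_iff]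
    constructor
    · push_cast; linarith [cfval_nonneg hs]
    · push_cast; linarith [cfval_lt_one hs]
  rw [this]; push_cast; ring

end CF

lemma cf_iterate : ∀ (n : ℕ) (a : ℕ → ℕ), (∀ k, 2 ≤ a k) →
    gaussMap^[n] (cfval a) = cfval (fun i => a (i+n)) := by
  intro n
  induction n with
  | zero => intro a ha; simp
  | succ n ih =>
    intro a ha
    rw [Function.iterate_succ_apply, cf_gauss ha]
    exact ih _ (fun k => ha (k+1))

lemma cf_digit (a : ℕ → ℕ) (ha : ∀ k, 2 ≤ a k) (n : ℕ) : cfDigit (cfval a) n = a n := by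
  rw [cfDigit, cf_iterate n a ha]
  have hs : ∀ k, 2 ≤ (fun i => a (i+n)) k := fun k => ha (k+n)
  rw [cf_inv hs]
  have hfix : (fun i => (fun j => a (j+n)) (i+1)) = fun i => a (i+(n+1)) := by
    funext i; simp only []; congr 1; omega
  rw [hfix]
  have h0 : 0 ≤ cfval (fun i => a (i+(n+1))) := cfval_nonneg (fun k => ha (k+(n+1)))
  have h1 : cfval (fun i => a (i+(n+1))) < 1 := cfval_lt_one (fun k => ha (k+(n+1)))
  have hz : ((fun i => a (i+n)) 0 : ℝ) = (a n : ℝ) := by norm_num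
  rw [Int.floor_eq_iff]
  constructor
  · rw [hz]; push_cast; linarith
  · rw [hz]; push_cast; linarith


lemma conv_eq (a : ℕ → ℕ) (ha : ∀ k, 2 ≤ a k) : ∀ n,
    (convAux (cfval a) n).1 = ((pp a n : ℤ), (qq a n : ℤ)) ∧
    (convAux (cfval a) n).2 = (match n with
      | 0 => ((1:ℤ), (0:ℤ)) | m+1 => ((pp a m : ℤ), (qq a m : ℤ))) := by
  intro n
  induction n with
  | zero => constructor <;> simp [convAux, pp, qq]
  | succ n ih =>
    obtain ⟨ih1, ih2⟩ := ih
    have hd := cf_digit a ha n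
    constructor
    · show (cfDigit (cfval a) n * (convAux (cfval a) n).1.1 + (convAux (cfval a) n).2.1,
        cfDigit (cfval a) n * (convAux (cfval a) n).1.2 + (convAux (cfval a) n).2.2) = _
      rw [ih1, ih2, hd]
      match n with
      | 0 => simp [pp, qq]
      | m+1 =>
        show ((a (m+1) : ℤ) * pp a (m+1) + pp a m, (a (m+1) : ℤ) * qq a (m+1) + qq a m) = _
        have e1 : pp a (m+2) = a (m+1) * pp a (m+1) + pp a m := rfl
        have e2 : qq a (m+2) = a (m+1) * qq a (m+1) + qq a m := rfl
        rw [e1, e2]; push_cast; rfl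
    · show (convAux (cfval a) n).1 = _
      rw [ih1]

lemma qConv_eq (a : ℕ → ℕ) (ha : ∀ k, 2 ≤ a k) (n : ℕ) :
    qConv (cfval a) n = (qq a n : ℤ) := by
  have := (conv_eq a ha n).1
  rw [qConv, this]

lemma irr_aux : ∀ q : ℕ, ∀ p : ℤ, ∀ x : ℝ,
    (∀ n, gaussMap^[n] x ∈ Set.Ioo (0:ℝ) 1) → x = p / q → False := by
  intro q
  induction q using Nat.strong_induction_on with
  | _ q ih =>
    intro p x horb hx
    have h0 := horb 0
    simp only [Function.iterate_zero, id_eq] at h0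
    obtain ⟨hx0, hx1⟩ := h0
    rcases Nat.eq_zero_or_pos q with hq | hq
    · rw [hq] at hx; norm_num at hx; rw [hx] at hx0; exact lt_irrefl _ hx0
    have hqR : (0:ℝ) < q := by exact_mod_cast hq
    have hp0 : 0 < p := by
      by_contra h
      push_neg at h
      have : x ≤ 0 := by rw [hx]; apply div_nonpos_of_nonpos_of_nonneg; exact_mod_cast h; positivity
      linarith
    have hpq : p < q := by
      by_contra h
      push_neg at h
      have : (1:ℝ) ≤ x := by
        rw [hx, le_div_iff₀ hqR, one_mul]; exact_mod_cast h
      linarith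
    have hpR : (0:ℝ) < p := by exact_mod_cast hp0
    -- gaussMap x = (q - p * ⌊(q:ℝ)/p⌋) / p
    have hgx : gaussMap x = ((q : ℤ) - p * ⌊(q:ℝ)/(p:ℝ)⌋ : ℤ) / (p.toNat : ℕ) := by
      rw [gaussMap, hx, one_div_div, Int.fract]
      have : ((p.toNat : ℕ) : ℝ) = (p : ℝ) := by
        exact_mod_cast congrArg (Int.cast : ℤ → ℝ) (Int.toNat_of_nonneg hp0.le)
      rw [this]
      push_cast
      field_simp
    have horb' : ∀ n, gaussMap^[n] (gaussMap x) ∈ Set.Ioo (0:ℝ) 1 := by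
      intro n
      have := horb (n+1)
      rwa [Function.iterate_succ_apply] at this
    exact ih p.toNat (by omega) _ _ horb' hgx

noncomputable def dig (n q : ℕ) : ℕ := ⌈Real.exp ((q : ℝ) / ((n / 2 + 1 : ℕ) : ℝ))⌉₊

noncomputable def QP : ℕ → ℕ × ℕ
  | 0 => (1, dig 0 1)
  | n+1 => ((QP n).2, dig (n+1) (QP n).2 * (QP n).2 + (QP n).1)

noncomputable def A (n : ℕ) : ℕ := dig n (QP n).1

lemma dig_pos (n q : ℕ) : 0 < dig n q := by
  rw [dig, Nat.ceil_pos]; exact Real.exp_pos _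

lemma QP_pos : ∀ n, 0 < (QP n).1 ∧ 0 < (QP n).2 := by
  intro n
  induction n with
  | zero => exact ⟨one_pos, dig_pos 0 1⟩
  | succ n ih =>
    refine ⟨ih.2, ?_⟩
    have := dig_pos (n+1) (QP n).2
    have := ih.1
    show 0 < dig (n+1) (QP n).2 * (QP n).2 + (QP n).1
    positivity

lemma qq_A : ∀ n, QP n = (qq A n, qq A (n+1)) := by
  intro n
  induction n with
  | zero => rfl
  | succ n ih =>
    show ((QP n).2, dig (n+1) (QP n).2 * (QP n).2 + (QP n).1) = _
    have h1 : (QP n).1 = qq A n := by rw [ih]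
    have h2 : (QP n).2 = qq A (n+1) := by rw [ih]
    have hA : A (n+1) = dig (n+1) (QP n).2 := by
      rw [A]; congr 1
    rw [h2] at hA
    rw [h1, h2, ← hA]
    rfl

lemma Q_def (n : ℕ) : qq A n = (QP n).1 := by rw [qq_A n]

lemma A_eq (n : ℕ) : A n = dig n (qq A n) := by rw [A, Q_def]

-- t n is the target exponent
noncomputable def tt (n : ℕ) : ℝ := (qq A n : ℝ) / ((n / 2 + 1 : ℕ) : ℝ)

lemma tt_pos (n : ℕ) : 0 < tt n := by
  have h := (QP_pos n).1
  rw [← Q_def] at h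
  have : (0:ℝ) < qq A n := by exact_mod_cast h
  have h2 : (0:ℝ) < ((n / 2 + 1 : ℕ) : ℝ) := by positivity
  exact div_pos this h2

lemma A_ge (n : ℕ) : Real.exp (tt n) ≤ A n := by
  rw [A_eq, dig]; exact Nat.le_ceil _

lemma A_le (n : ℕ) : (A n : ℝ) ≤ Real.exp (tt n) + 1 := by
  rw [A_eq, dig]
  exact le_of_lt (Nat.ceil_lt_add_one (Real.exp_pos _).le)

lemma hA2 : ∀ n, 2 ≤ A n := by
  intro n
  have h := A_ge n
  have h1 : (1:ℝ) < Real.exp (tt n) := Real.one_lt_exp_iff.mpr (tt_pos n)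
  have : (1:ℝ) < (A n : ℝ) := lt_of_lt_of_le h1 h
  exact_mod_cast Nat.succ_le_of_lt (by exact_mod_cast this)


lemma qq_ge_pow' (n : ℕ) : 2 ^ n ≤ qq A n := qq_ge_pow hA2 n
lemma qq_mono' (n : ℕ) : qq A n ≤ qq A (n+1) := qq_mono hA2 n

lemma Qpos (n : ℕ) : (0:ℝ) < (qq A n : ℝ) := by
  have : (0:ℕ) < 2 ^ n := Nat.pow_pos (by norm_num)
  have := lt_of_lt_of_le this (qq_ge_pow' n)
  exact_mod_cast this

lemma Q_rec_ge (n : ℕ) : (A n : ℝ) * (qq A n : ℝ) ≤ (qq A (n+1) : ℝ) := by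
  match n with
  | 0 => show (A 0 : ℝ) * ((1:ℕ) : ℝ) ≤ ((qq A 1 : ℕ) : ℝ); simp [qq]
  | m+1 =>
    have : qq A (m+2) = A (m+1) * qq A (m+1) + qq A m := rfl
    rw [this]; push_cast; linarith [Qpos m]

lemma Q_rec_le (n : ℕ) : (qq A (n+1) : ℝ) ≤ ((A n : ℝ) + 1) * (qq A n : ℝ) := by
  match n with
  | 0 =>
    show ((qq A 1 : ℕ) : ℝ) ≤ _
    have : qq A 1 = A 0 := rfl
    rw [this]
    show (A 0 : ℝ) ≤ ((A 0 : ℝ) + 1) * ((1:ℕ) : ℝ)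
    push_cast; linarith
  | m+1 =>
    have h : qq A (m+2) = A (m+1) * qq A (m+1) + qq A m := rfl
    have hm : (qq A m : ℝ) ≤ qq A (m+1) := by exact_mod_cast qq_mono' m
    rw [h]; push_cast; nlinarith [Qpos (m+1)]

lemma logQ_ge (n : ℕ) : tt n + Real.log (qq A n : ℝ) ≤ Real.log (qq A (n+1) : ℝ) := by
  have hA : (0:ℝ) < (A n : ℝ) := by
    have := hA2 n; exact_mod_cast lt_of_lt_of_le (by norm_num) this
  have h1 : Real.log ((A n : ℝ) * (qq A n : ℝ)) ≤ Real.log (qq A (n+1) : ℝ) :=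
    Real.log_le_log (mul_pos hA (Qpos n)) (Q_rec_ge n)
  rw [Real.log_mul hA.ne' (Qpos n).ne'] at h1
  have h2 : tt n ≤ Real.log (A n : ℝ) := by
    have := A_ge n
    calc tt n = Real.log (Real.exp (tt n)) := (Real.log_exp _).symm
      _ ≤ _ := Real.log_le_log (Real.exp_pos _) this
  linarith

lemma logQ_le (n : ℕ) : Real.log (qq A (n+1) : ℝ) ≤ tt n + Real.log (qq A n : ℝ) + 2 := by
  have he : (1:ℝ) ≤ Real.exp (tt n) := (Real.one_lt_exp_iff.mpr (tt_pos n)).le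
  have h1 : (qq A (n+1) : ℝ) ≤ (3 * Real.exp (tt n)) * (qq A n : ℝ) := by
    have := Q_rec_le n
    have := A_le n
    nlinarith [Qpos n]
  have h2 : Real.log (qq A (n+1) : ℝ) ≤ Real.log ((3 * Real.exp (tt n)) * (qq A n : ℝ)) :=
    Real.log_le_log (Qpos (n+1)) h1
  rw [Real.log_mul (by positivity) (Qpos n).ne', Real.log_mul (by norm_num) (Real.exp_pos _).ne',
    Real.log_exp] at h2
  have h3 : Real.log 3 ≤ 2 := by
    have := Real.log_le_sub_one_of_pos (by norm_num : (0:ℝ) < 3)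
    linarith
  linarith

noncomputable def bb (n : ℕ) : ℝ := Real.log (qq A (n+1) : ℝ) / (qq A n : ℝ)
noncomputable def rr (n : ℕ) : ℝ := bb n - 1 / ((n / 2 + 1 : ℕ) : ℝ)

lemma tt_div (n : ℕ) : tt n / (qq A n : ℝ) = 1 / ((n / 2 + 1 : ℕ) : ℝ) := by
  rw [tt, div_right_comm, div_self (Qpos n).ne']

lemma logQn_nonneg (n : ℕ) : 0 ≤ Real.log (qq A n : ℝ) := by
  apply Real.log_nonneg
  have : (1:ℕ) ≤ qq A n := le_trans (Nat.one_le_two_pow) (qq_ge_pow' n)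
  exact_mod_cast this

lemma rr_nonneg (n : ℕ) : 0 ≤ rr n := by
  have h := logQ_ge n
  have hq := Qpos n
  have hl := logQn_nonneg n
  rw [rr, bb, ← tt_div, sub_nonneg, div_le_div_iff_of_pos_right hq]  -- guess name
  linarith

lemma sqrtQ (n : ℕ) : (Real.sqrt 2) ^ n ≤ Real.sqrt (qq A n : ℝ) := by
  have h : ((2:ℝ)) ^ n ≤ (qq A n : ℝ) := by exact_mod_cast qq_ge_pow' n
  calc (Real.sqrt 2) ^ n = Real.sqrt (2 ^ n) := by
        rw [show ((2:ℝ)^n) = ((Real.sqrt 2) ^ n)^2 by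
          rw [← pow_mul, mul_comm, pow_mul, Real.sq_sqrt (by norm_num)]]
        rw [Real.sqrt_sq (by positivity)]
    _ ≤ _ := Real.sqrt_le_sqrt h

lemma log_le_two_sqrt {x : ℝ} (hx : 1 ≤ x) : Real.log x ≤ 2 * Real.sqrt x := by
  have h0 : (0:ℝ) < x := by linarith
  have hs : (0:ℝ) < Real.sqrt x := Real.sqrt_pos.mpr h0
  have := Real.log_le_sub_one_of_pos hs
  have hl : Real.log (Real.sqrt x) = Real.log x / 2 := Real.log_sqrt h0.le
  linarith [hl ▸ this]

lemma rr_le (n : ℕ) : rr n ≤ 4 * ((Real.sqrt 2)⁻¹) ^ n := by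
  have hq := Qpos n
  have h1 : (1:ℝ) ≤ (qq A n : ℝ) := by
    have : (1:ℕ) ≤ qq A n := le_trans Nat.one_le_two_pow (qq_ge_pow' n)
    exact_mod_cast this
  have hs1 : (1:ℝ) ≤ Real.sqrt (qq A n : ℝ) := Real.one_le_sqrt.mpr h1
  have hsq : Real.sqrt (qq A n : ℝ) * Real.sqrt (qq A n : ℝ) = (qq A n : ℝ) :=
    Real.mul_self_sqrt hq.le
  have key : rr n ≤ (Real.log (qq A n : ℝ) + 2) / (qq A n : ℝ) := by
    have h := logQ_le n
    rw [rr, bb, ← tt_div, div_sub_div_same, div_le_div_iff_of_pos_right]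
    · linarith
    · exact hq
  have key2 : (Real.log (qq A n : ℝ) + 2) / (qq A n : ℝ) ≤ 4 / Real.sqrt (qq A n : ℝ) := by
    have hlog := log_le_two_sqrt h1
    rw [div_le_div_iff₀ hq (by positivity)]
    calc (Real.log (qq A n : ℝ) + 2) * Real.sqrt (qq A n : ℝ)
        ≤ (2 * Real.sqrt (qq A n : ℝ) + 2 * Real.sqrt (qq A n : ℝ)) * Real.sqrt (qq A n : ℝ) := by
          apply mul_le_mul_of_nonneg_right _ (by positivity)
          have : (2:ℝ) ≤ 2 * Real.sqrt (qq A n : ℝ) := by linarith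
          linarith
      _ = 4 * (Real.sqrt (qq A n : ℝ) * Real.sqrt (qq A n : ℝ)) := by ring
      _ = 4 * (qq A n : ℝ) := by rw [hsq]
  have key3 : (4:ℝ) / Real.sqrt (qq A n : ℝ) ≤ 4 * ((Real.sqrt 2)⁻¹) ^ n := by
    rw [inv_pow, mul_comm, inv_mul_eq_div]
    have hsn : (0:ℝ) < (Real.sqrt 2) ^ n := by positivity
    exact div_le_div_of_nonneg_left (by norm_num) hsn (sqrtQ n)
  linarith

lemma sqrt2_inv_lt_one : (Real.sqrt 2)⁻¹ < 1 := by
  have h : (1:ℝ) < Real.sqrt 2 := by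
    rw [show (1:ℝ) = Real.sqrt 1 by rw [Real.sqrt_one]]
    exact Real.sqrt_lt_sqrt (by norm_num) (by norm_num)
  rw [inv_lt_one_iff₀]
  right; exact h

lemma rr_summable : Summable rr := by
  apply Summable.of_nonneg_of_le rr_nonneg rr_le
  exact (summable_geometric_of_lt_one (by positivity) sqrt2_inv_lt_one).mul_left 4

noncomputable def TT (N : ℕ) : ℝ := ∑ n ∈ range N, (-1:ℝ)^n * (1 / ((n / 2 + 1 : ℕ) : ℝ))

lemma TT_pair : ∀ M : ℕ, TT (2*M) = 0 ∧ TT (2*M+1) = 1 / ((M + 1 : ℕ) : ℝ) := by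
  intro M
  induction M with
  | zero => constructor <;> simp [TT]
  | succ M ih =>
    have h1 : (2*M+1)/2 = M := by omega
    have h2 : (2*M+2)/2 = M+1 := by omega
    have e1 : TT (2*(M+1)) = TT (2*M+1) + (-1:ℝ)^(2*M+1) * (1 / (((2*M+1) / 2 + 1 : ℕ) : ℝ)) := by
      rw [show 2*(M+1) = (2*M+1)+1 by ring, TT, TT, Finset.sum_range_succ]
    have e2 : TT (2*(M+1)+1) = TT (2*(M+1)) + (-1:ℝ)^(2*M+2) * (1 / (((2*M+2) / 2 + 1 : ℕ) : ℝ)) := by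
      rw [show 2*(M+1)+1 = (2*M+2)+1 by ring, show 2*(M+1) = 2*M+2 by ring, TT, TT,
        Finset.sum_range_succ]
    have s1 : (-1:ℝ)^(2*M+1) = -1 := Odd.neg_one_pow ⟨M, by ring⟩
    have s2 : (-1:ℝ)^(2*M+2) = 1 := Even.neg_one_pow ⟨M+1, by ring⟩
    have c1 : TT (2*(M+1)) = 0 := by
      rw [e1, ih.2, h1, s1]; ring
    refine ⟨c1, ?_⟩
    rw [e2, c1, h2, s2]; ring

lemma TT_bound (N : ℕ) : 0 ≤ TT N ∧ TT N ≤ 1 / ((N / 2 + 1 : ℕ) : ℝ) := by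
  rcases Nat.even_or_odd N with ⟨M, hM⟩ | ⟨M, hM⟩
  · have h := (TT_pair M).1
    rw [show 2*M = M+M by ring] at h
    rw [hM, h]
    exact ⟨le_refl 0, by positivity⟩
  · have h := (TT_pair M).2
    rw [hM, h]
    have hd : (2*M+1)/2 = M := by omega
    rw [hd]
    exact ⟨by positivity, le_refl _⟩

lemma TT_tendsto : Tendsto TT atTop (nhds 0) := by
  apply squeeze_zero (fun N => (TT_bound N).1) (fun N => (TT_bound N).2)
  apply squeeze_zero (fun N => by positivity)
    (g := fun N : ℕ => 2 * (1 / ((N:ℝ) + 1)))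
  · intro N
    have h1 : (0:ℝ) < ((N / 2 + 1 : ℕ) : ℝ) := by positivity
    have h2 : ((N:ℝ) + 1) ≤ 2 * ((N / 2 + 1 : ℕ) : ℝ) := by
      have : N + 1 ≤ 2 * (N/2 + 1) := by omega
      exact_mod_cast this
    rw [mul_one_div, div_le_div_iff₀ h1 (by positivity)]
    linarith
  · have := tendsto_one_div_add_atTop_nhds_zero_nat.const_mul (2:ℝ)
    simpa using this


theorem exists_wilton_not_brjuno :
    ∃ x : ℝ, Irrational x ∧ 0 < x ∧ x < 1 ∧
      (∃ L : ℝ, Tendsto (fun N => ∑ n ∈ Finset.range N,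
          (-1 : ℝ) ^ n * (Real.log (qConv x (n + 1) : ℝ) / (qConv x n : ℝ)))
        atTop (nhds L)) ∧
      ¬ Summable (fun n => Real.log (qConv x (n + 1) : ℝ) / (qConv x n : ℝ)) := by
  refine ⟨cfval A, ?_, cfval_pos hA2, cfval_lt_one hA2, ?_, ?_⟩
  · -- irrational
    rintro ⟨r, hr⟩
    refine irr_aux r.den r.num (cfval A) ?_ ?_
    · intro n
      rw [cf_iterate n A hA2]
      exact ⟨cfval_pos (fun k => hA2 (k+n)), cfval_lt_one (fun k => hA2 (k+n))⟩
    · rw [← hr, Rat.cast_def]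
  · -- Wilton
    have hfun : ∀ n : ℕ, Real.log ((qConv (cfval A) (n+1) : ℤ) : ℝ) / ((qConv (cfval A) n : ℤ) : ℝ)
        = bb n := by
      intro n
      rw [qConv_eq A hA2, qConv_eq A hA2, bb]
      norm_num
    have hsplit : ∀ N, ∑ n ∈ Finset.range N,
        (-1 : ℝ) ^ n * (Real.log ((qConv (cfval A) (n+1) : ℤ) : ℝ) / ((qConv (cfval A) n : ℤ) : ℝ))
        = TT N + ∑ n ∈ Finset.range N, (-1:ℝ)^n * rr n := by
      intro N
      rw [TT, ← Finset.sum_add_distrib]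
      apply Finset.sum_congr rfl
      intro n _
      rw [hfun n, rr]
      ring
    have hrs : Summable (fun n => (-1:ℝ)^n * rr n) := by
      apply Summable.of_abs
      have : (fun n => |(-1:ℝ)^n * rr n|) = rr := by
        funext n
        rw [abs_mul, abs_pow, abs_neg, abs_one, one_pow, one_mul, abs_of_nonneg (rr_nonneg n)]
      rw [this]
      exact rr_summable
    refine ⟨∑' n, (-1:ℝ)^n * rr n, ?_⟩
    have h2 := hrs.hasSum.tendsto_sum_nat
    have := TT_tendsto.add h2
    rw [zero_add] at this
    convert this using 2 with N
    exact hsplit N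
  · -- not Brjuno
    intro hS
    have hbb : Summable bb := by
      have : (fun n => Real.log ((qConv (cfval A) (n+1) : ℤ) : ℝ) / ((qConv (cfval A) n : ℤ) : ℝ))
          = bb := by
        funext n
        rw [qConv_eq A hA2, qConv_eq A hA2, bb]
        norm_num
      rwa [this] at hS
    have h1 : Summable (fun n : ℕ => 1 / ((n / 2 + 1 : ℕ) : ℝ)) := by
      have := hbb.sub rr_summable
      have he : (fun n => bb n - rr n) = fun n : ℕ => 1 / ((n / 2 + 1 : ℕ) : ℝ) := by
        funext n; rw [rr]; ring
      rwa [he] at this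
    have h2 : Summable (fun n : ℕ => 1 / ((n:ℝ) + 1)) := by
      apply Summable.of_nonneg_of_le (fun n => by positivity) (fun n => ?_) h1
      apply div_le_div_of_nonneg_left (by norm_num) (by positivity)
      have : (n / 2 + 1 : ℕ) ≤ n + 1 := by omega
      calc ((n / 2 + 1 : ℕ) : ℝ) ≤ ((n + 1 : ℕ) : ℝ) := by exact_mod_cast this
        _ = (n:ℝ) + 1 := by push_cast; ring
    have h3 : Summable (fun n : ℕ => 1 / (n:ℝ)) := by
      rw [← summable_nat_add_iff 1] 
      convert h2 using 2 with n
      · rfl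
      · push_cast; ring
    exact Real.not_summable_one_div_natCast h3
end
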